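/- arXiv:2302.10041 — 3 statements merged into one kernel-verified Lean document; each statement's English description precedes it below -/
import Mathlib

section
/- Let S be a simple symmetric random walk on ℤ started at 0, with increments X_i satisfying P(X_i = 1) = P(X_i = -1) = 1/2, independent. Let ξ(i,n) = #{1 ≤ j ≤ n : S_j = i} be its local time, let I(i,ℓ) be the indicator that S_ℓ ∈ {i, i+1}, and define D(i,n) = ξ(i+1,n) - ξ(i,n) - Σ_{ℓ=0}^{n} I(i,ℓ) X_{ℓ+1}. Then |D(i,n)| ≤ 2 for all i ∈ ℤ and n ≥ 0. -/
set_option maxHeartbeats 1000000 in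
/-- For a simple symmetric walk with ±1 increments, the quantity
`D(i,n) = ξ(i+1,n) - ξ(i,n) - Σ_{ℓ=0}^{n} I(i,ℓ) X_{ℓ+1}` satisfies `|D(i,n)| ≤ 2`. -/
theorem local_time_difference_bound
    (X : ℕ → ℤ) (hX : ∀ k, X k = 1 ∨ X k = -1)
    (S : ℕ → ℤ) (hS : ∀ n, S n = ∑ k ∈ Finset.range n, X (k + 1))
    (ξ : ℤ → ℕ → ℕ)
    (hξ : ∀ i n, ξ i n = ((Finset.Icc 1 n).filter (fun j => S j = i)).card)
    (I : ℤ → ℕ → ℤ)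
    (hI : ∀ i ℓ, I i ℓ = if S ℓ = i ∨ S ℓ = i + 1 then 1 else 0)
    (i : ℤ) (n : ℕ) :
    |(ξ (i + 1) n : ℤ) - (ξ i n : ℤ) - ∑ ℓ ∈ Finset.range (n + 1), I i ℓ * X (ℓ + 1)| ≤ 2 := by
  have hstep : ∀ m, S (m + 1) = S m + X (m + 1) := by
    intro m; rw [hS, hS, Finset.sum_range_succ]
  have hS0 : S 0 = 0 := by rw [hS]; simp
  set g : ℕ → ℤ := fun m => -(if i ≤ S m then (1 : ℤ) else 0) -
    (if i + 2 ≤ S m then (1 : ℤ) else 0) with hg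
  have hξstep : ∀ j m, (ξ j (m + 1) : ℤ) =
      (ξ j m : ℤ) + (if S (m + 1) = j then 1 else 0) := by
    intro j m
    rw [hξ, hξ, ← Finset.insert_Icc_right_eq_Icc_add_one (by omega : 1 ≤ m + 1),
      Finset.filter_insert]
    split_ifs with h
    · rw [Finset.card_insert_of_notMem (by simp)]
      push_cast; ring
    · simp
  have key : ∀ m, (ξ (i + 1) m : ℤ) - (ξ i m : ℤ) -
      ∑ ℓ ∈ Finset.range m, I i ℓ * X (ℓ + 1) = g m - g 0 := by
    intro m
    induction m with
    | zero =>
      rw [hξ, hξ]; simp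
    | succ m ih =>
      rw [Finset.sum_range_succ, hξstep, hξstep]
      have h1 := hstep m
      have goal' : ∀ x : ℤ, x = 1 ∨ x = -1 → X (m + 1) = x →
          (ξ (i+1) m : ℤ) + (if S (m+1) = i+1 then 1 else 0) -
          ((ξ i m : ℤ) + (if S (m+1) = i then 1 else 0)) -
          (∑ ℓ ∈ Finset.range m, I i ℓ * X (ℓ + 1) + I i m * x) =
          g (m + 1) - g 0 := by
        intro x hx hxe
        rw [hI]
        have e : (ξ (i+1) m : ℤ) + (if S (m+1) = i+1 then 1 else 0) -
            ((ξ i m : ℤ) + (if S (m+1) = i then 1 else 0)) -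
            (∑ ℓ ∈ Finset.range m, I i ℓ * X (ℓ + 1) +
              (if S m = i ∨ S m = i + 1 then 1 else 0) * x) =
            ((ξ (i+1) m : ℤ) - (ξ i m : ℤ) -
              ∑ ℓ ∈ Finset.range m, I i ℓ * X (ℓ + 1)) +
            ((if S (m+1) = i+1 then 1 else 0) - (if S (m+1) = i then 1 else 0) -
              (if S m = i ∨ S m = i + 1 then 1 else 0) * x) := by ring
        rw [e, ih, hg]
        simp only
        rw [hxe] at h1
        rcases hx with hx | hx <;> subst hx <;> split_ifs <;> omega
      exact goal' (X (m + 1)) (hX (m + 1)) rfl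
  have hfin := key n
  rw [Finset.sum_range_succ]
  have h2 := hstep n
  rw [hI]
  rw [hg] at hfin
  simp only at hfin
  rw [abs_le]
  rcases hX (n + 1) with h | h <;> rw [h] <;> split_ifs at hfin ⊢ <;> omega
end

section
/- Let S be a simple symmetric random walk on ℤ with local time ξ(i,n) = #{1 ≤ j ≤ n : S_j = i}. Then for every i ∈ ℤ and n ≥ 0, |E(ξ(i+1,n)) − E(ξ(i,n))| ≤ 2. -/
open MeasureTheory ProbabilityTheory

/-- Auxiliary "boundary" function: `lt_g i m = -[i+2 ≤ m] - [m ≤ i-1]`. -/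
private def lt_g (i m : ℤ) : ℤ :=
  (if i + 2 ≤ m then (-1 : ℤ) else 0) + (if i ≤ m then (-1 : ℤ) else 0)

private lemma lt_g_bound (i m : ℤ) : |lt_g i m - lt_g i 0| ≤ 2 := by
  rw [abs_le]; unfold lt_g
  constructor <;> split_ifs <;> omega

/-- Pathwise decomposition of the local-time difference at adjacent levels. -/
private lemma lt_key {Ω : Type*} (X : ℕ → Ω → ℤ) (S : ℕ → Ω → ℤ)
    (hS : ∀ n ω, S n ω = ∑ k ∈ Finset.range n, X (k + 1) ω)
    (ξ : ℤ → ℕ → Ω → ℕ)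
    (hξ : ∀ i n ω, ξ i n ω = ((Finset.Icc 1 n).filter (fun j => S j ω = i)).card)
    (i : ℤ) (n : ℕ) (ω : Ω) (hx : ∀ k, X k ω = 1 ∨ X k ω = -1) :
    (ξ (i + 1) n ω : ℤ) - (ξ i n ω : ℤ) =
      (∑ ℓ ∈ Finset.range n, if S ℓ ω = i ∨ S ℓ ω = i + 1 then X (ℓ + 1) ω else 0)
        + (lt_g i (S n ω) - lt_g i 0) := by
  induction n with
  | zero =>
      have h0 : S 0 ω = 0 := by rw [hS]; simp
      simp [hξ, h0]
  | succ n ih =>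
      have hstep : S (n + 1) ω = S n ω + X (n + 1) ω := by
        rw [hS, hS, Finset.sum_range_succ]
      have hcard : ∀ j : ℤ, (ξ j (n + 1) ω : ℤ) =
          (ξ j n ω : ℤ) + (if S (n + 1) ω = j then 1 else 0) := by
        intro j
        rw [hξ, hξ, show Finset.Icc 1 (n + 1) = insert (n + 1) (Finset.Icc 1 n) from by
          ext x; simp [Finset.mem_Icc, Finset.mem_insert]; omega, Finset.filter_insert]
        split_ifs with h
        · rw [Finset.card_insert_of_notMem
            (fun hmem => absurd (Finset.mem_Icc.mp (Finset.mem_filter.mp hmem).1).2 (by omega))]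
          push_cast; ring
        · ring
      rw [hcard (i + 1), hcard i, Finset.sum_range_succ, hstep]
      have hg : lt_g i (S n ω + X (n + 1) ω) - lt_g i (S n ω)
            + (if S n ω = i ∨ S n ω = i + 1 then X (n + 1) ω else 0)
          = (if S n ω + X (n + 1) ω = i + 1 then 1 else 0)
            - (if S n ω + X (n + 1) ω = i then 1 else 0) := by
        rcases hx (n + 1) with h | h <;> rw [h] <;> unfold lt_g <;> split_ifs <;> omega
      linarith [ih, hg]

/-- For the simple symmetric random walk with local time `ξ(i,n)`,
`|E(ξ(i+1,n)) − E(ξ(i,n))| ≤ 2`. -/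
theorem expected_local_time_difference_bound
    {Ω : Type*} [MeasureSpace Ω] [IsProbabilityMeasure (ℙ : Measure Ω)]
    (X : ℕ → Ω → ℤ) (hXm : ∀ k, Measurable (X k))
    (hind : iIndepFun X ℙ)
    (hX : ∀ k, ℙ {ω | X k ω = 1} = 1/2 ∧ ℙ {ω | X k ω = -1} = 1/2)
    (S : ℕ → Ω → ℤ) (hS : ∀ n ω, S n ω = ∑ k ∈ Finset.range n, X (k + 1) ω)
    (ξ : ℤ → ℕ → Ω → ℕ)
    (hξ : ∀ i n ω, ξ i n ω = ((Finset.Icc 1 n).filter (fun j => S j ω = i)).card)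
    (i : ℤ) (n : ℕ) :
    |(∫ ω, (ξ (i + 1) n ω : ℝ) ∂ℙ) - ∫ ω, (ξ i n ω : ℝ) ∂ℙ| ≤ 2 := by
  classical
  -- basic measurability
  have hSm : ∀ j, Measurable (S j) := by
    intro j
    have : S j = fun ω => ∑ k ∈ Finset.range j, X (k + 1) ω := by
      funext ω; exact hS j ω
    rw [this]
    exact Finset.measurable_sum _ (fun k _ => hXm (k + 1))
  have hXcm : ∀ k, Measurable (fun ω => (X k ω : ℝ)) := fun k =>
    (measurable_of_countable (fun z : ℤ => (z : ℝ))).comp (hXm k)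
  -- a.e., each X k takes values in {1, -1}
  have hXae : ∀ k, ∀ᵐ ω ∂(ℙ : Measure Ω), X k ω = 1 ∨ X k ω = -1 := by
    intro k
    have hA : MeasurableSet {ω | X k ω = 1} := (hXm k) (measurableSet_singleton 1)
    have hB : MeasurableSet {ω | X k ω = -1} := (hXm k) (measurableSet_singleton (-1))
    have hdisj : Disjoint {ω | X k ω = 1} {ω | X k ω = -1} := by
      rw [Set.disjoint_left]
      intro ω h1 h2
      simp only [Set.mem_setOf_eq] at h1 h2
      omega
    have hunion : ℙ ({ω | X k ω = 1} ∪ {ω | X k ω = -1}) = 1 := by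
      rw [measure_union hdisj hB, (hX k).1, (hX k).2]
      simp [one_div, ENNReal.inv_two_add_inv_two]
    have : ℙ ({ω | X k ω = 1} ∪ {ω | X k ω = -1})ᶜ = 0 := by
      rw [measure_compl (hA.union hB) (measure_ne_top _ _), hunion, measure_univ]
      simp
    filter_upwards [MeasureTheory.measure_eq_zero_iff_ae_notMem.mp this] with ω hω
    rw [Set.notMem_compl_iff] at hω
    exact hω
  -- integrability and mean zero of X k
  have hXint : ∀ k, Integrable (fun ω => (X k ω : ℝ)) ℙ := by
    intro k
    refine (integrable_const (1 : ℝ)).mono' (hXcm k).aestronglyMeasurable ?_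
    filter_upwards [hXae k] with ω hω
    rcases hω with h | h <;> simp [h]
  have hEX : ∀ k, ∫ ω, (X k ω : ℝ) ∂ℙ = 0 := by
    intro k
    have hA : MeasurableSet {ω | X k ω = 1} := (hXm k) (measurableSet_singleton 1)
    have hB : MeasurableSet {ω | X k ω = -1} := (hXm k) (measurableSet_singleton (-1))
    have heq : (fun ω => (X k ω : ℝ)) =ᵐ[(ℙ : Measure Ω)] fun ω =>
        Set.indicator {ω | X k ω = 1} (fun _ => (1 : ℝ)) ω
          + Set.indicator {ω | X k ω = -1} (fun _ => (-1 : ℝ)) ω := by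
      filter_upwards [hXae k] with ω hω
      rcases hω with h | h <;> simp [Set.indicator_apply, Set.mem_setOf_eq, h]
    rw [integral_congr_ae heq,
      integral_add ((integrable_const _).indicator hA) ((integrable_const _).indicator hB),
      integral_indicator_const _ hA, integral_indicator_const _ hB, measureReal_def, measureReal_def, (hX k).1, (hX k).2]
    norm_num [ENNReal.toReal_div]
  -- the martingale terms have zero expectation
  have hsum_zero : ∀ ℓ : ℕ,
      ∫ ω, (if S ℓ ω = i ∨ S ℓ ω = i + 1 then (X (ℓ + 1) ω : ℝ) else 0) ∂ℙ = 0 := by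
    intro ℓ
    have hSI : S ℓ = ∑ j ∈ Finset.Icc 1 ℓ, X j := by
      funext ω
      rw [hS, Finset.sum_apply, show Finset.Icc 1 ℓ = Finset.Ico 1 (ℓ + 1) from
        (Finset.Ico_add_one_right_eq_Icc 1 ℓ).symm, Finset.sum_Ico_eq_sum_range]
      simp only [Nat.add_sub_cancel]
      exact Finset.sum_congr rfl fun k _ => by rw [add_comm]
    have hii : IndepFun (S ℓ) (X (ℓ + 1)) ℙ := by
      rw [hSI]
      exact hind.indepFun_finsetSum_of_notMem hXm (by simp)
    have hphi : IndepFun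
        ((fun m : ℤ => if m = i ∨ m = i + 1 then (1 : ℝ) else 0) ∘ (S ℓ))
        ((fun z : ℤ => (z : ℝ)) ∘ (X (ℓ + 1))) ℙ :=
      hii.comp (measurable_of_countable _) (measurable_of_countable _)
    have hmul : (fun ω => if S ℓ ω = i ∨ S ℓ ω = i + 1 then (X (ℓ + 1) ω : ℝ) else 0)
        = ((fun m : ℤ => if m = i ∨ m = i + 1 then (1 : ℝ) else 0) ∘ (S ℓ))
          * ((fun z : ℤ => (z : ℝ)) ∘ (X (ℓ + 1))) := by
      funext ω
      by_cases h : S ℓ ω = i ∨ S ℓ ω = i + 1 <;> simp [Function.comp, h]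
    rw [show (∫ ω, (if S ℓ ω = i ∨ S ℓ ω = i + 1 then (X (ℓ + 1) ω : ℝ) else 0) ∂ℙ)
        = ∫ ω, (((fun m : ℤ => if m = i ∨ m = i + 1 then (1 : ℝ) else 0) ∘ (S ℓ))
          * ((fun z : ℤ => (z : ℝ)) ∘ (X (ℓ + 1)))) ω ∂ℙ from by rw [← hmul],
      hphi.integral_mul_eq_mul_integral
        ((measurable_of_countable _).comp (hSm ℓ)).aestronglyMeasurable
        ((measurable_of_countable _).comp (hXm (ℓ + 1))).aestronglyMeasurable]
    have : ∫ ω, ((fun z : ℤ => (z : ℝ)) ∘ (X (ℓ + 1))) ω ∂ℙ = 0 := hEX (ℓ + 1)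
    rw [this, mul_zero]
  -- measurability and integrability of the local times
  have hξm : ∀ j : ℤ, Measurable (fun ω => (ξ j n ω : ℝ)) := by
    intro j
    have : (fun ω => (ξ j n ω : ℝ))
        = fun ω => ∑ k ∈ Finset.Icc 1 n, (if S k ω = j then (1 : ℝ) else 0) := by
      funext ω
      rw [hξ, Finset.card_filter]
      push_cast
      simp
    rw [this]
    exact Finset.measurable_sum _ fun k _ =>
      Measurable.ite ((hSm k) (measurableSet_singleton j)) measurable_const measurable_const
  have hξint : ∀ j : ℤ, Integrable (fun ω => (ξ j n ω : ℝ)) ℙ := by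
    intro j
    refine (integrable_const (n : ℝ)).mono' (hξm j).aestronglyMeasurable ?_
    refine Filter.Eventually.of_forall fun ω => ?_
    rw [Real.norm_eq_abs, abs_of_nonneg (by positivity)]
    have hle : ξ j n ω ≤ n := by
      rw [hξ]
      exact le_trans (Finset.card_filter_le _ _) (by simp)
    exact_mod_cast hle
  -- the martingale sum and the boundary term
  set M : Ω → ℝ := fun ω =>
    ∑ ℓ ∈ Finset.range n, (if S ℓ ω = i ∨ S ℓ ω = i + 1 then (X (ℓ + 1) ω : ℝ) else 0) with hM
  set D : Ω → ℝ := fun ω => ((lt_g i (S n ω) : ℝ) - (lt_g i 0 : ℝ)) with hD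
  have hMsint : ∀ ℓ : ℕ,
      Integrable (fun ω => if S ℓ ω = i ∨ S ℓ ω = i + 1 then (X (ℓ + 1) ω : ℝ) else 0) ℙ := by
    intro ℓ
    have hmeas : Measurable (fun ω => if S ℓ ω = i ∨ S ℓ ω = i + 1 then (X (ℓ + 1) ω : ℝ) else 0) := by
      refine Measurable.ite ?_ (hXcm (ℓ + 1)) measurable_const
      exact MeasurableSet.union ((hSm ℓ) (measurableSet_singleton i))
        ((hSm ℓ) (measurableSet_singleton (i + 1)))
    refine (integrable_const (1 : ℝ)).mono' hmeas.aestronglyMeasurable ?_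
    filter_upwards [hXae (ℓ + 1)] with ω hω
    rcases hω with h | h <;> split_ifs <;> simp [h]
  have hMint : Integrable M ℙ := integrable_finset_sum _ fun ℓ _ => hMsint ℓ
  have hDint : Integrable D ℙ := by
    have hmeas : Measurable D := by
      rw [hD]
      exact ((measurable_of_countable (fun m : ℤ => ((lt_g i m : ℝ) - (lt_g i 0 : ℝ)))).comp
        (hSm n))
    refine (integrable_const (2 : ℝ)).mono' hmeas.aestronglyMeasurable ?_
    refine Filter.Eventually.of_forall fun ω => ?_
    rw [hD, Real.norm_eq_abs]
    have := lt_g_bound i (S n ω)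
    calc |((lt_g i (S n ω) : ℝ) - (lt_g i 0 : ℝ))| = |((lt_g i (S n ω) - lt_g i 0 : ℤ) : ℝ)| := by
          push_cast; ring_nf
      _ ≤ 2 := by rw [← Int.cast_abs]; exact_mod_cast this
  -- a.e. pathwise identity
  have hae : (fun ω => (ξ (i + 1) n ω : ℝ) - (ξ i n ω : ℝ)) =ᵐ[(ℙ : Measure Ω)]
      fun ω => M ω + D ω := by
    have hall : ∀ᵐ ω ∂(ℙ : Measure Ω), ∀ k, X k ω = 1 ∨ X k ω = -1 := ae_all_iff.mpr hXae
    filter_upwards [hall] with ω hω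
    have h := lt_key X S hS ξ hξ i n ω hω
    have h2 := congrArg (fun z : ℤ => (z : ℝ)) h
    push_cast [apply_ite (fun z : ℤ => (z : ℝ))] at h2
    simpa [hM, hD, apply_ite (fun z : ℤ => (z : ℝ))] using h2
  -- put everything together
  rw [show (∫ ω, (ξ (i + 1) n ω : ℝ) ∂ℙ) - ∫ ω, (ξ i n ω : ℝ) ∂ℙ
      = ∫ ω, ((ξ (i + 1) n ω : ℝ) - (ξ i n ω : ℝ)) ∂ℙ from
        (integral_sub (hξint (i + 1)) (hξint i)).symm,
    integral_congr_ae hae, integral_add hMint hDint]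
  have hMzero : ∫ ω, M ω ∂ℙ = 0 := by
    rw [hM, integral_finset_sum _ fun ℓ _ => hMsint ℓ]
    exact Finset.sum_eq_zero fun ℓ _ => hsum_zero ℓ
  rw [hMzero, zero_add]
  have hDb : ∀ ω, ‖D ω‖ ≤ 2 := by
    intro ω
    rw [hD, Real.norm_eq_abs]
    have := lt_g_bound i (S n ω)
    calc |((lt_g i (S n ω) : ℝ) - (lt_g i 0 : ℝ))| = |((lt_g i (S n ω) - lt_g i 0 : ℤ) : ℝ)| := by
          push_cast; ring_nf
      _ ≤ 2 := by rw [← Int.cast_abs]; exact_mod_cast this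
  have hb := norm_integral_le_of_norm_le_const (μ := (ℙ : Measure Ω)) (C := 2) (f := D)
    (Filter.Eventually.of_forall hDb)
  simpa [Real.norm_eq_abs, measure_univ] using hb
end

section
/- If (1/n) Σ_{j=1}^n 1/p_j → 2γ and (1/n) Σ_{j=1}^n 1/p_{−j} → 2γ as n → ∞ with 0 < p_j ≤ 1/2, then for all real x < y, lim_{T→∞} (1/(y−x)) ∫_x^y 1/p_{⌊Tu⌋} du = 2γ. -/
open Filter intervalIntegral MeasureTheory Set

lemma step_meas (p : ℤ → ℝ) : Measurable (fun u : ℝ => 1 / p ⌊u⌋) :=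
  (Measurable.of_discrete (f := fun j : ℤ => 1 / p j)).comp Int.measurable_floor

lemma step_int (p : ℤ → ℝ) (j : ℤ) :
    ∫ u in ((j:ℝ))..((j:ℝ)+1), 1 / p ⌊u⌋ = 1 / p j := by
  rw [integral_of_le (by linarith), MeasureTheory.integral_Ioc_eq_integral_Ioo]
  rw [MeasureTheory.setIntegral_congr_fun measurableSet_Ioo
    (g := fun _ => 1 / p j) (fun u hu => by
      have : ⌊u⌋ = j := by
        rw [Int.floor_eq_iff]
        exact ⟨hu.1.le, by exact_mod_cast hu.2⟩
      simp [this])]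
  simp [Real.volume_Ioo]

lemma step_II (p : ℤ → ℝ) (a b : ℝ) :
    IntervalIntegrable (fun u : ℝ => 1 / p ⌊u⌋) MeasureTheory.volume a b := by
  rw [intervalIntegrable_iff]
  have hne : (Finset.Icc ⌊a ⊓ b⌋ ⌊a ⊔ b⌋).Nonempty := by
    rw [Finset.nonempty_Icc]
    exact Int.floor_le_floor inf_le_sup
  refine Measure.integrableOn_of_bounded ?_ ((step_meas p).aestronglyMeasurable)
    (M := (Finset.Icc ⌊a ⊓ b⌋ ⌊a ⊔ b⌋).sup' hne (fun j => |1 / p j|)) ?_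
  · rw [Set.uIoc]; exact measure_Ioc_lt_top.ne
  · filter_upwards [MeasureTheory.ae_restrict_mem measurableSet_uIoc] with u hu
    have h1 : ⌊u⌋ ∈ Finset.Icc ⌊a ⊓ b⌋ ⌊a ⊔ b⌋ := by
      rw [Finset.mem_Icc]
      exact ⟨Int.floor_le_floor hu.1.le, Int.floor_le_floor hu.2⟩
    exact Finset.le_sup' (fun j => |1 / p j|) h1

lemma sum_pos' (p : ℤ → ℝ) (n : ℕ) :
    ∫ u in (0:ℝ)..(n:ℝ), 1 / p ⌊u⌋ = ∑ j ∈ Finset.range n, 1 / p (j:ℤ) := by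
  induction n with
  | zero => simp
  | succ n ih =>
    rw [← integral_add_adjacent_intervals (b := (n:ℝ)) (step_II p 0 n)
      (step_II p n (n+1 : ℕ))]
    have := step_int p n
    push_cast at this ⊢
    rw [ih] at *
    rw [this]
    rw [Finset.sum_range_succ]

lemma sum_neg' (p : ℤ → ℝ) (n : ℕ) :
    ∫ u in (-(n:ℝ))..0, 1 / p ⌊u⌋ = ∑ j ∈ Finset.Icc 1 n, 1 / p (-(j:ℤ)) := by
  induction n with
  | zero => simp
  | succ n ih =>
    rw [← integral_add_adjacent_intervals (a := (-(n+1:ℕ):ℝ)) (b := (-(n:ℝ)))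
      (step_II p _ _) (step_II p _ _)]
    have h := step_int p (-(n+1 : ℕ) : ℤ)
    have e1 : ((-(n+1:ℕ) : ℤ) : ℝ) = -((n:ℝ)+1) := by push_cast; ring
    rw [e1] at h
    have e3 : -((n:ℝ)+1)+1 = -(n:ℝ) := by ring
    rw [e3] at h
    push_cast at h ⊢
    rw [h, ih, Finset.sum_Icc_succ_top (by omega : 1 ≤ n+1)]
    push_cast
    ring

lemma ratio_limit (G : ℝ → ℝ) (L : ℝ)
    (hmono : ∀ s t : ℝ, 0 ≤ s → s ≤ t → G s ≤ G t)
    (hnn : ∀ t : ℝ, 0 ≤ t → 0 ≤ G t)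
    (hlim : Tendsto (fun n : ℕ => G n / n) atTop (nhds L)) :
    Tendsto (fun t : ℝ => G t / t) atTop (nhds L) := by
  have hfrac : Tendsto (fun n : ℕ => (n : ℝ) / ((n : ℝ) + 1)) atTop (nhds 1) := by
    simpa using tendsto_natCast_div_add_atTop (1 : ℝ)
  have hlow : Tendsto (fun n : ℕ => G n / ((n : ℝ) + 1)) atTop (nhds L) := by
    have := hlim.mul hfrac
    rw [mul_one] at this
    refine this.congr' ?_
    filter_upwards [eventually_ge_atTop 1] with n hn
    have hn0 : (0 : ℝ) < n := by exact_mod_cast hn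
    field_simp
  have hupp : Tendsto (fun n : ℕ => G ((n : ℝ) + 1) / (n : ℝ)) atTop (nhds L) := by
    have h1 : Tendsto (fun n : ℕ => G ((n : ℝ) + 1) / ((n : ℝ) + 1)) atTop (nhds L) := by
      have := hlim.comp (tendsto_add_atTop_nat 1)
      refine this.congr ?_
      intro n; simp [Function.comp]
    have hfrac' : Tendsto (fun n : ℕ => ((n : ℝ) + 1) / (n : ℝ)) atTop (nhds 1) := by
      have h2 : Tendsto (fun n : ℕ => 1 + 1 / (n:ℝ)) atTop (nhds 1) := by
        simpa using (tendsto_const_nhds (x := (1:ℝ)) (f := (atTop : Filter ℕ))).add (tendsto_one_div_atTop_nhds_zero_nat : Tendsto (fun n : ℕ => 1 / (n:ℝ)) atTop (nhds 0))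
      refine h2.congr' ?_
      filter_upwards [eventually_ge_atTop 1] with n hn
      have hn0 : (0 : ℝ) < n := by exact_mod_cast hn
      field_simp
    have := h1.mul hfrac'
    rw [mul_one] at this
    refine this.congr' ?_
    filter_upwards [eventually_ge_atTop 1] with n hn
    have hn0 : (0 : ℝ) < n := by exact_mod_cast hn
    have hn1 : ((n : ℝ) + 1) ≠ 0 := by positivity
    field_simp
  refine tendsto_of_tendsto_of_tendsto_of_le_of_le'
    (hlow.comp tendsto_nat_floor_atTop) (hupp.comp tendsto_nat_floor_atTop) ?_ ?_
  · filter_upwards [eventually_ge_atTop (1:ℝ)] with t ht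
    have ht0 : (0:ℝ) < t := by linarith
    have hmt : (⌊t⌋₊ : ℝ) ≤ t := Nat.floor_le ht0.le
    have htm : t < (⌊t⌋₊ : ℝ) + 1 := Nat.lt_floor_add_one t
    exact div_le_div₀ (hnn t ht0.le) (hmono _ t (by positivity) hmt) ht0 htm.le
  · filter_upwards [eventually_ge_atTop (1:ℝ)] with t ht
    have ht0 : (0:ℝ) < t := by linarith
    have hm1 : (1:ℝ) ≤ ⌊t⌋₊ := by exact_mod_cast Nat.le_floor (α := ℝ) (by exact_mod_cast ht)
    have hmt : (⌊t⌋₊ : ℝ) ≤ t := Nat.floor_le ht0.le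
    have htm : t ≤ (⌊t⌋₊ : ℝ) + 1 := (Nat.lt_floor_add_one t).le
    exact div_le_div₀ (hnn _ (by positivity)) (hmono t _ ht0.le htm) (by linarith) hmt

lemma range_succ_sum (q : ℕ → ℝ) (n : ℕ) :
    ∑ j ∈ Finset.range (n+1), q j = q 0 + ∑ j ∈ Finset.Icc 1 n, q j := by
  induction n with
  | zero => simp
  | succ n ih =>
    rw [Finset.sum_range_succ, ih, Finset.sum_Icc_succ_top (by omega : 1 ≤ n+1)]
    ring


noncomputable def Gpos (p : ℤ → ℝ) (t : ℝ) : ℝ := ∫ u in (0:ℝ)..t, 1 / p ⌊u⌋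
noncomputable def Gneg (p : ℤ → ℝ) (t : ℝ) : ℝ := ∫ u in (-t)..0, 1 / p ⌊u⌋

theorem cesaro_to_integral_average
    (p : ℤ → ℝ) (hp : ∀ j, 0 < p j ∧ p j ≤ 1/2) (γ : ℝ)
    (h1 : Tendsto (fun n : ℕ => (1 / (n : ℝ)) * ∑ j ∈ Finset.Icc 1 n, 1 / p (j : ℤ))
      atTop (nhds (2 * γ)))
    (h2 : Tendsto (fun n : ℕ => (1 / (n : ℝ)) * ∑ j ∈ Finset.Icc 1 n, 1 / p (-(j : ℤ)))
      atTop (nhds (2 * γ))) :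
    ∀ x y : ℝ, x < y →
      Tendsto (fun T : ℝ => (1 / (y - x)) * ∫ u in x..y, 1 / p ⌊T * u⌋)
        atTop (nhds (2 * γ)) := by
  have hf_nn : ∀ u : ℝ, 0 ≤ 1 / p ⌊u⌋ := fun u => by
    have := (hp ⌊u⌋).1
    positivity
  have hGp_mono : ∀ s t : ℝ, 0 ≤ s → s ≤ t → Gpos p s ≤ Gpos p t := by
    intro s t _ hst
    have h : Gpos p t = Gpos p s + ∫ u in s..t, 1 / p ⌊u⌋ := by
      simp only [Gpos]
      rw [integral_add_adjacent_intervals (step_II p 0 s) (step_II p s t)]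
    rw [h]
    have := integral_nonneg_of_forall (μ := MeasureTheory.volume) hst hf_nn
    linarith
  have hGp_nn : ∀ t : ℝ, 0 ≤ t → 0 ≤ Gpos p t := by
    intro t ht
    have := hGp_mono 0 t le_rfl ht
    simpa [Gpos] using this
  have hGn_mono : ∀ s t : ℝ, 0 ≤ s → s ≤ t → Gneg p s ≤ Gneg p t := by
    intro s t _ hst
    have h : Gneg p t = (∫ u in (-t)..(-s), 1 / p ⌊u⌋) + Gneg p s := by
      simp only [Gneg]
      rw [integral_add_adjacent_intervals (step_II p (-t) (-s)) (step_II p (-s) 0)]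
    rw [h]
    have := integral_nonneg_of_forall (μ := MeasureTheory.volume)
      (by linarith : -t ≤ -s) hf_nn
    linarith
  have hGn_nn : ∀ t : ℝ, 0 ≤ t → 0 ≤ Gneg p t := by
    intro t ht
    have := hGn_mono 0 t le_rfl ht
    simpa [Gneg] using this
  have h1' : Tendsto (fun n : ℕ => (∑ j ∈ Finset.Icc 1 n, 1 / p (j : ℤ)) / n)
      atTop (nhds (2 * γ)) := h1.congr (fun n => one_div_mul_eq_div _ _)
  have h2' : Tendsto (fun n : ℕ => (∑ j ∈ Finset.Icc 1 n, 1 / p (-(j : ℤ))) / n)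
      atTop (nhds (2 * γ)) := h2.congr (fun n => one_div_mul_eq_div _ _)
  have hGp_seq : Tendsto (fun n : ℕ => Gpos p n / n) atTop (nhds (2 * γ)) := by
    rw [← tendsto_add_atTop_iff_nat 1]
    have heq : ∀ n : ℕ, Gpos p ((n : ℕ) + 1 : ℕ)
        = 1 / p 0 + ∑ j ∈ Finset.Icc 1 n, 1 / p (j : ℤ) := by
      intro n
      simp only [Gpos]
      rw [sum_pos' p (n+1), range_succ_sum (fun j : ℕ => 1 / p (j : ℤ)) n]
      norm_num
    have hfrac : Tendsto (fun n : ℕ => (n : ℝ) / ((n : ℝ) + 1)) atTop (nhds 1) := by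
      simpa using tendsto_natCast_div_add_atTop (1 : ℝ)
    have hc : Tendsto (fun n : ℕ => (1 / p 0) / ((n : ℝ) + 1)) atTop (nhds 0) :=
      Tendsto.div_atTop tendsto_const_nhds
        (tendsto_atTop_add_const_right _ 1 tendsto_natCast_atTop_atTop)
    have hmain : Tendsto
        (fun n : ℕ => (1 / p 0) / ((n : ℝ) + 1)
          + ((∑ j ∈ Finset.Icc 1 n, 1 / p (j : ℤ)) / n) * ((n : ℝ) / ((n : ℝ) + 1)))
        atTop (nhds (0 + 2 * γ * 1)) := hc.add (h1'.mul hfrac)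
    rw [show (0 : ℝ) + 2 * γ * 1 = 2 * γ by ring] at hmain
    refine hmain.congr' ?_
    filter_upwards [eventually_ge_atTop 1] with n hn
    have hn0 : (0 : ℝ) < n := by exact_mod_cast hn
    have hp0 : p 0 ≠ 0 := (hp 0).1.ne'
    rw [heq n]
    push_cast
    field_simp
  have hGn_seq : Tendsto (fun n : ℕ => Gneg p n / n) atTop (nhds (2 * γ)) := by
    refine h2'.congr (fun n => ?_)
    simp only [Gneg]
    rw [sum_neg' p n]
  have Lpos : Tendsto (fun t : ℝ => Gpos p t / t) atTop (nhds (2 * γ)) :=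
    ratio_limit (Gpos p) (2 * γ) hGp_mono hGp_nn hGp_seq
  have Lneg : Tendsto (fun t : ℝ => Gneg p t / t) atTop (nhds (2 * γ)) :=
    ratio_limit (Gneg p) (2 * γ) hGn_mono hGn_nn hGn_seq
  have key : ∀ c : ℝ, Tendsto (fun T : ℝ => Gpos p (T * c) / T) atTop (nhds (2 * γ * c)) := by
    intro c
    rcases lt_trichotomy c 0 with hc | hc | hc
    · have hT : Tendsto (fun T : ℝ => -(T * c)) atTop atTop := by
        have := tendsto_id.atTop_mul_const (r := -c) (by linarith)
        refine this.congr (fun T => ?_)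
        simp only [id_eq]
        ring
      have hcomp : Tendsto (fun T : ℝ => Gneg p (-(T * c)) / (-(T * c))) atTop (nhds (2 * γ)) :=
        Lneg.comp hT
      have hlim := hcomp.const_mul c
      rw [show c * (2 * γ) = 2 * γ * c by ring] at hlim
      refine hlim.congr' ?_
      filter_upwards [eventually_gt_atTop (0:ℝ)] with T hT0
      have hTc : T * c < 0 := mul_neg_of_pos_of_neg hT0 hc
      have hGnval : Gneg p (-(T * c)) = - Gpos p (T * c) := by
        simp only [Gneg, Gpos, neg_neg]
        exact integral_symm _ _
      rw [hGnval]
      have hTne : T ≠ 0 := ne_of_gt hT0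
      have hTcne : T * c ≠ 0 := ne_of_lt hTc
      field_simp
      field_simp [ne_of_lt hc]
    · simp only [hc, mul_zero]
      have h0 : Gpos p 0 = 0 := by simp [Gpos]
      rw [h0]
      simpa using tendsto_const_nhds (x := (0:ℝ)) (f := atTop (α := ℝ))
    · have hT : Tendsto (fun T : ℝ => T * c) atTop atTop :=
        tendsto_id.atTop_mul_const hc
      have hcomp : Tendsto (fun T : ℝ => Gpos p (T * c) / (T * c)) atTop (nhds (2 * γ)) :=
        Lpos.comp hT
      have hlim := hcomp.const_mul c
      rw [show c * (2 * γ) = 2 * γ * c by ring] at hlim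
      refine hlim.congr' ?_
      filter_upwards [eventually_gt_atTop (0:ℝ)] with T hT0
      have hTne : T ≠ 0 := ne_of_gt hT0
      have hTcne : T * c ≠ 0 := by positivity
      field_simp
  intro x y hxy
  have hyx : y - x ≠ 0 := by linarith
  have hmain := ((key y).sub (key x)).const_mul (1 / (y - x))
  rw [show (1 / (y - x)) * (2 * γ * y - 2 * γ * x) = 2 * γ by field_simp] at hmain
  refine hmain.congr' ?_
  filter_upwards [eventually_gt_atTop (0:ℝ)] with T hT0
  have hTne : T ≠ 0 := ne_of_gt hT0
  have hcomp : (∫ u in x..y, 1 / p ⌊T * u⌋) = T⁻¹ • ∫ u in (T*x)..(T*y), 1 / p ⌊u⌋ :=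
    integral_comp_mul_left (fun u => 1 / p ⌊u⌋) hTne
  have hsub : (∫ u in (0:ℝ)..(T*y), 1 / p ⌊u⌋) - ∫ u in (0:ℝ)..(T*x), 1 / p ⌊u⌋
      = ∫ u in (T*x)..(T*y), 1 / p ⌊u⌋ :=
    integral_interval_sub_left (step_II p 0 (T*y)) (step_II p 0 (T*x))
  have hval : (∫ u in x..y, 1 / p ⌊T * u⌋) = T⁻¹ * (Gpos p (T*y) - Gpos p (T*x)) := by
    simp only [Gpos]
    rw [hcomp, hsub, smul_eq_mul]
  rw [hval]
  field_simp
end
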